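/- Let u be a substring of w that is repeated and maximal to the right, with occurrences addressed by the suffix-array interval [i, i+k-1]. Then u is also maximal to the left if and only if: w[r[i]-1] ≠ w[r[i+k-1]-1], or r[i] = 1, or r[i+k-1] = 1, or p[r[i+k-1]-1] - p[r[i]-1] ≠ k-1. -/

import Mathlib

def occs {α : Type*} [DecidableEq α] (w u : List α) : Finset ℕ :=
  (Finset.range (w.length + 1)).filter (fun i => u <+: w.drop i)

def countOcc {α : Type*} [DecidableEq α] (w u : List α) : ℕ := (occs w u).card
/-- `r` is the suffix array of `w` (0-indexed): `r` maps `{0,...,n-1}` bijectively onto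
itself and lists the starting positions of the suffixes of `w` in strictly increasing
lexicographic order. -/
def IsSuffixArray {α : Type*} [LinearOrder α] (w : List α) (r : ℕ → ℕ) : Prop :=
  (∀ i, i < w.length → r i < w.length) ∧
  (∀ i j, i < w.length → j < w.length → i ≠ j → r i ≠ r j) ∧
  (∀ i j, i < j → j < w.length → List.Lex (· < ·) (w.drop (r i)) (w.drop (r j)))

/-- Sandwich lemma: a list lexicographically between two lists sharing a prefix `q`
also has `q` as a prefix. -/
private lemma lex_between {α : Type*} [LinearOrder α] :
    ∀ (q : List α) {x y z : List α}, q <+: x → q <+: z →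
      ¬ List.Lex (· < ·) y x → ¬ List.Lex (· < ·) z y → q <+: y
  | [], _, y, _, _, _, _, _ => ⟨y, rfl⟩
  | a :: q, x, y, z, hx, hz, hyx, hzy => by
    obtain ⟨x', rfl⟩ := hx
    obtain ⟨z', rfl⟩ := hz
    match y with
    | [] => exact absurd List.Lex.nil hyx
    | b :: y' =>
      have hab : a = b := by
        rcases lt_trichotomy a b with h | h | h
        · exact absurd (List.Lex.rel h) hzy
        · exact h
        · exact absurd (List.Lex.rel h) hyx
      subst hab
      have h1 : ¬ List.Lex (· < ·) y' (q ++ x') := fun h => hyx (List.Lex.cons h)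
      have h2 : ¬ List.Lex (· < ·) (q ++ z') y' := fun h => hzy (List.Lex.cons h)
      have := lex_between q (q.prefix_append x') (q.prefix_append z') h1 h2
      exact List.cons_prefix_cons.mpr ⟨rfl, this⟩

/-- For a repeated substring `u` maximal to the right, occurring exactly at the
suffix-array interval `[i, i+k-1]`, left-maximality is equivalent to the stated
condition on the extreme occurrences. -/
theorem stmt4 {α : Type*} [LinearOrder α] (w : List α) (r p : ℕ → ℕ)
    (hr : IsSuffixArray w r) (hp : ∀ i, i < w.length → p (r i) = i)
    (u : List α) (i k : ℕ) (hk : 2 ≤ k) (hik : i + k ≤ w.length)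
    (hocc : occs w u = (Finset.Ico i (i + k)).image r)
    (hright : ∀ c : α, countOcc w (u ++ [c]) < countOcc w u) :
    (∀ c : α, countOcc w (c :: u) < countOcc w u) ↔
      (w[r i - 1]? ≠ w[r (i + k - 1) - 1]? ∨ r i = 0 ∨ r (i + k - 1) = 0 ∨
        p (r (i + k - 1) - 1) - p (r i - 1) ≠ k - 1) := by
  classical
  obtain ⟨hr1, hr2, hr3⟩ := hr
  set n := w.length with hn
  set j := i + k - 1 with hj
  have hjik : j < i + k := by omega
  have hij : i ≤ j := by omega
  have hjn : j < n := by omega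
  have hin : i < n := by omega
  have hmem : ∀ m, m ∈ occs w u ↔ m < n + 1 ∧ u <+: w.drop m := by
    intro m; simp [occs, Finset.mem_filter, Finset.mem_range, hn]
  -- r is injective on indices < n
  have hrinj : ∀ a b, a < n → b < n → r a = r b → a = b := by
    intro a b ha hb hab
    by_contra hne
    exact hr2 a b ha hb hne hab
  -- cardinality of occs w u is k
  have card_occs : countOcc w u = k := by
    unfold countOcc
    rw [hocc, Finset.card_image_of_injOn, Nat.card_Ico]
    · omega
    · intro a ha b hb hab
      simp only [Finset.coe_Ico, Set.mem_Ico] at ha hb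
      exact hrinj a b (by omega) (by omega) hab
  -- u is nonempty
  have hu : u ≠ [] := by
    intro h
    subst h
    have h1 : occs w ([] : List α) = Finset.range (n + 1) := by
      ext m; simp [occs, hn]
    have h2 : countOcc w ([] : List α) = n + 1 := by
      unfold countOcc; rw [h1, Finset.card_range]
    omega
  -- occurrences are < n
  have hmlt : ∀ m, m ∈ occs w u → m < n := by
    intro m hm
    obtain ⟨h1, h2⟩ := (hmem m).1 hm
    by_contra h
    have : w.drop m = [] := List.drop_eq_nil_of_le (by omega)
    rw [this] at h2
    exact hu (List.prefix_nil.mp h2)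
  have hrij : ∀ t, i ≤ t → t < i + k → r t ∈ occs w u := by
    intro t h1 h2
    rw [hocc]
    exact Finset.mem_image.mpr ⟨t, Finset.mem_Ico.mpr ⟨h1, h2⟩, rfl⟩
  -- surjectivity of r and properties of p
  have hsurj : ∀ m, m < n → p m < n ∧ r (p m) = m := by
    have himg : (Finset.range n).image r = Finset.range n := by
      apply Finset.eq_of_subset_of_card_le
      · intro x hx
        obtain ⟨t, ht, rfl⟩ := Finset.mem_image.mp hx
        exact Finset.mem_range.mpr (hr1 t (Finset.mem_range.mp ht))
      · rw [Finset.card_image_of_injOn, Finset.card_range]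
        intro a ha b hb hab
        simp only [Finset.coe_range, Set.mem_Iio] at ha hb
        exact hrinj a b ha hb hab
    intro m hm
    have : m ∈ (Finset.range n).image r := by rw [himg]; exact Finset.mem_range.mpr hm
    obtain ⟨t, ht, rfl⟩ := Finset.mem_image.mp this
    have ht' := Finset.mem_range.mp ht
    rw [hp t ht']
    exact ⟨ht', rfl⟩
  -- lex order reflects index order
  have hlex : ∀ a b, a < n → b < n →
      (List.Lex (· < ·) (w.drop (r a)) (w.drop (r b)) ↔ a < b) := by
    intro a b ha hb
    constructor
    · intro h
      by_contra hab
      push_neg at hab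
      rcases eq_or_lt_of_le hab with rfl | hba
      · exact asymm h h
      · exact asymm (hr3 b a hba ha) h
    · exact fun h => hr3 a b h hb
  have hplex : ∀ a b, a < n → b < n →
      List.Lex (· < ·) (w.drop a) (w.drop b) → p a < p b := by
    intro a b ha hb h
    obtain ⟨hpa, hra⟩ := hsurj a ha
    obtain ⟨hpb, hrb⟩ := hsurj b hb
    exact (hlex _ _ hpa hpb).1 (by rwa [hra, hrb])
  -- characterization of occurrences of c :: u
  have hmemc : ∀ (c : α) m, m ∈ occs w (c :: u) ↔ m < n + 1 ∧ (c :: u) <+: w.drop m := by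
    intro c m; simp [occs, Finset.mem_filter, Finset.mem_range, hn]
  have hconsocc : ∀ (c : α) m, m ∈ occs w (c :: u) ↔ m + 1 ∈ occs w u ∧ w[m]? = some c := by
    intro c m
    constructor
    · intro hm
      obtain ⟨h1, h2⟩ := (hmemc c m).1 hm
      have hmn : m < n := by
        by_contra h
        have : w.drop m = [] := List.drop_eq_nil_of_le (by omega)
        rw [this] at h2
        exact absurd (List.prefix_nil.mp h2) (by simp)
      rw [List.drop_eq_getElem_cons hmn] at h2
      obtain ⟨hcw, hpre⟩ := List.cons_prefix_cons.mp h2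
      refine ⟨(hmem _).2 ⟨by omega, hpre⟩, ?_⟩
      rw [List.getElem?_eq_getElem hmn, hcw]
    · rintro ⟨h1, h2⟩
      obtain ⟨hmn, hcw⟩ := List.getElem?_eq_some_iff.mp h2
      refine (hmemc c m).2 ⟨by omega, ?_⟩
      rw [List.drop_eq_getElem_cons hmn, hcw]
      exact List.cons_prefix_cons.mpr ⟨rfl, ((hmem _).1 h1).2⟩
  -- occurrences of c :: u shifted by one give occurrences of u
  have himgsub : ∀ c : α, (occs w (c :: u)).image (· + 1) ⊆ occs w u := by
    intro c m hm
    obtain ⟨m', hm', rfl⟩ := Finset.mem_image.mp hm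
    exact ((hconsocc c m').1 hm').1
  have hcount_le : ∀ c : α, countOcc w (c :: u) ≤ k := by
    intro c
    have h1 : ((occs w (c :: u)).image (· + 1)).card = countOcc w (c :: u) :=
      Finset.card_image_of_injective _ (fun a b h => by simpa using h)
    rw [← card_occs, ← h1]
    exact Finset.card_le_card (himgsub c)
  -- the sandwich counting lemma
  have hsand : ∀ (c : α) (a b : ℕ), b < n → (c :: u) <+: w.drop (r a) →
      (c :: u) <+: w.drop (r b) → b + 1 - a ≤ countOcc w (c :: u) := by
    intro c a b hb hqa hqb
    rcases le_or_gt a b with hab | hab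
    swap
    · omega
    have han : a < n := by omega
    have hsub : (Finset.Icc a b).image r ⊆ occs w (c :: u) := by
      intro m hm
      obtain ⟨s, hs, rfl⟩ := Finset.mem_image.mp hm
      obtain ⟨has, hsb⟩ := Finset.mem_Icc.mp hs
      have hsn : s < n := by omega
      refine (hmemc c _).2 ⟨by have := hr1 s hsn; omega, ?_⟩
      refine lex_between (c :: u) hqa hqb ?_ ?_
      · intro h
        have := (hlex s a hsn han).1 h
        omega
      · intro h
        have := (hlex b s hb hsn).1 h
        omega
    calc b + 1 - a = (Finset.Icc a b).card := by rw [Nat.card_Icc]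
      _ = ((Finset.Icc a b).image r).card := by
          rw [Finset.card_image_of_injOn]
          intro x hx y hy hxy
          simp only [Finset.coe_Icc, Set.mem_Icc] at hx hy
          exact hrinj x y (by omega) (by omega) hxy
      _ ≤ _ := Finset.card_le_card hsub
  -- prefix facts about preceding characters
  have hdropcons : ∀ (c : α) t, i ≤ t → t < i + k → r t ≠ 0 → w[r t - 1]? = some c →
      (c :: u) <+: w.drop (r t - 1) := by
    intro c t h1 h2 h3 h4
    obtain ⟨hlt, hcw⟩ := List.getElem?_eq_some_iff.mp h4
    have := ((hmem _).1 (hrij t h1 h2)).2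
    rw [List.drop_eq_getElem_cons hlt, hcw, (by omega : r t - 1 + 1 = r t)]
    exact List.cons_prefix_cons.mpr ⟨rfl, this⟩
  -- strict p-monotonicity of shifted occurrences
  have hpmono : ∀ (c : α) t t', i ≤ t → t < t' → t' < i + k → r t ≠ 0 → r t' ≠ 0 →
      w[r t - 1]? = some c → w[r t' - 1]? = some c → p (r t - 1) < p (r t' - 1) := by
    intro c t t' h1 h2 h3 h4 h5 h6 h7
    have hdt := hdropcons c t h1 (by omega) h4 h6
    have hdt' := hdropcons c t' (by omega) h3 h5 h7
    have hlt : r t - 1 < n := by have := hr1 t (by omega); omega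
    have hlt' : r t' - 1 < n := by have := hr1 t' (by omega); omega
    apply hplex _ _ hlt hlt'
    obtain ⟨hwt, hcwt⟩ := List.getElem?_eq_some_iff.mp h6
    obtain ⟨hwt', hcwt'⟩ := List.getElem?_eq_some_iff.mp h7
    rw [List.drop_eq_getElem_cons hwt, List.drop_eq_getElem_cons hwt', hcwt, hcwt',
      (by omega : r t - 1 + 1 = r t), (by omega : r t' - 1 + 1 = r t')]
    exact List.Lex.cons (hr3 t t' h2 (by omega))
  constructor
  · -- left-maximality → condition
    intro hL
    by_contra hR
    push_neg at hR
    obtain ⟨hEq, hri0, hrj0, hdiff⟩ := hR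
    -- the common preceding character
    have hriw : r i - 1 < n := by have := hr1 i hin; omega
    set c := w[r i - 1]'(hriw) with hc
    have hric : w[r i - 1]? = some c := List.getElem?_eq_getElem hriw
    have hrjc : w[r j - 1]? = some c := by rw [← hEq]; exact hric
    set a := p (r i - 1) with ha
    set b := p (r j - 1) with hb
    obtain ⟨hbn, hrb⟩ := hsurj (r j - 1) (by have := hr1 j hjn; omega)
    obtain ⟨han, hra⟩ := hsurj (r i - 1) hriw
    have hba : b = a + (k - 1) := by omega
    have hcount : k ≤ countOcc w (c :: u) := by
      have h1 := hsand c a b hbn (by rw [hra]; exact hdropcons c i le_rfl (by omega) hri0 hric)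
        (by rw [hrb]; exact hdropcons c j hij hjik hrj0 hrjc)
      omega
    have := hL c
    omega
  · -- condition → left-maximality
    intro hR c
    rw [card_occs]
    by_contra hc
    push_neg at hc
    have hck : countOcc w (c :: u) = k := le_antisymm (hcount_le c) hc
    -- every occurrence of u is preceded by c
    have hbij : occs w u = (occs w (c :: u)).image (· + 1) := by
      apply (Finset.eq_of_subset_of_card_le (himgsub c) ?_).symm
      rw [Finset.card_image_of_injective _ (fun x y h => by simpa using h : Function.Injective (· + 1))]
      unfold countOcc at card_occs hck
      omega
    have hallt : ∀ t, i ≤ t → t < i + k → r t ≠ 0 ∧ w[r t - 1]? = some c := by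
      intro t h1 h2
      have := hrij t h1 h2
      rw [hbij] at this
      obtain ⟨m', hm', hm'e⟩ := Finset.mem_image.mp this
      obtain ⟨_, hw⟩ := (hconsocc c m').1 hm'
      constructor
      · omega
      · rw [(by omega : r t - 1 = m')]; exact hw
    obtain ⟨hri0, hric⟩ := hallt i le_rfl (by omega)
    obtain ⟨hrj0, hrjc⟩ := hallt j hij hjik
    set a := p (r i - 1) with ha
    set b := p (r j - 1) with hb
    obtain ⟨hbn, hrb⟩ := hsurj (r j - 1) (by have := hr1 j hjn; omega)
    obtain ⟨han, hra⟩ := hsurj (r i - 1) (by have := hr1 i hin; omega)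
    -- lower bound : b ≥ a + (k-1)
    have hlow : ∀ s, s < k → a + s ≤ p (r (i + s) - 1) := by
      intro s hs
      induction s with
      | zero => simp [ha]
      | succ m ih =>
        have h1 := ih (by omega)
        obtain ⟨hm0, hmc⟩ := hallt (i + m) (by omega) (by omega)
        obtain ⟨hm0', hmc'⟩ := hallt (i + (m + 1)) (by omega) (by omega)
        have := hpmono c (i + m) (i + (m + 1)) (by omega) (by omega) (by omega) hm0 hm0' hmc hmc'
        omega
    have hlowb : a + (k - 1) ≤ b := by
      have hkj : i + (k - 1) = j := by omega
      have h2 := hlow (k - 1) (by omega)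
      rw [hkj] at h2
      exact h2
    -- upper bound via sandwich
    have hup : b + 1 - a ≤ k := by
      rw [← hck]
      exact hsand c a b hbn (by rw [hra]; exact hdropcons c i le_rfl (by omega) hri0 hric)
        (by rw [hrb]; exact hdropcons c j hij hjik hrj0 hrjc)
    have hdiff : b - a = k - 1 := by omega
    rcases hR with h | h | h | h
    · exact h (by rw [hric, hrjc])
    · exact hri0 h
    · exact hrj0 h
    · exact h hdiff
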